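/- As p decreases to p_c, (1 − q_p)/(p − p_c) converges to 2m₁³/m₂; that is, 1 − q_p = (2m₁³/m₂)(p − p_c)(1 + o(1)). -/

import Mathlib

open Filter Set Topology
open scoped Topology

/-- The probability generating function `f(s) = ∑ₖ aₖ sᵏ` of a distribution `a` on ℕ. -/
noncomputable def pgf (a : ℕ → ℝ) (s : ℝ) : ℝ := ∑' n, a n * s ^ n

/-- The generating function `f_p(s) = f(ps + 1 - p)` of the binomially `p`-thinned
(percolated) offspring distribution. -/
noncomputable def pgfp (a : ℕ → ℝ) (p s : ℝ) : ℝ := pgf a (p * s + 1 - p)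

lemma nn2 (n : ℕ) : 0 ≤ (n:ℝ) * ((n:ℝ) - 1) := by
  rcases n with _ | m
  · norm_num
  · push_cast; nlinarith [Nat.cast_nonneg (α := ℝ) m, sq_nonneg ((m:ℝ))]

lemma nn3 (n : ℕ) : 0 ≤ (n:ℝ) * ((n:ℝ) - 1) * ((n:ℝ) - 2) := by
  rcases n with _ | _ | m
  · norm_num
  · norm_num
  · push_cast; nlinarith [Nat.cast_nonneg (α := ℝ) m, sq_nonneg ((m:ℝ))]

lemma pow_bounds {x : ℝ} (hx0 : 0 ≤ x) (hx1 : x ≤ 1) (k : ℕ) :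
    1 - k*x + k*(k-1)/2*x^2 - k*(k-1)*(k-2)/6*x^3 ≤ (1-x)^k ∧
    (1-x)^k ≤ 1 - k*x + k*(k-1)/2*x^2 := by
  induction k with
  | zero => norm_num
  | succ n ih =>
    obtain ⟨hL, hU⟩ := ih
    have h1x : (0:ℝ) ≤ 1 - x := by linarith
    have hC2 : 0 ≤ (n:ℝ) * ((n:ℝ) - 1) := nn2 n
    have hC3 : 0 ≤ (n:ℝ) * ((n:ℝ) - 1) * ((n:ℝ) - 2) := nn3 n
    have hpow : (1-x)^(n+1) = (1-x)*(1-x)^n := by ring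
    constructor
    · have h1 := mul_le_mul_of_nonneg_left hL h1x
      have h2 : 0 ≤ (n:ℝ)*((n:ℝ)-1)*((n:ℝ)-2)/6 * x^4 := by positivity
      push_cast
      nlinarith [h1, h2]
    · have h1 := mul_le_mul_of_nonneg_left hU h1x
      have h2 : 0 ≤ (n:ℝ)*((n:ℝ)-1)/2 * x^3 := by positivity
      push_cast
      nlinarith [h1, h2]

lemma summable_aux {a : ℕ → ℝ} (ha0 : ∀ k, 0 ≤ a k) (hs : Summable a)
    {t : ℝ} (h0 : 0 ≤ t) (h1 : t ≤ 1) : Summable (fun k => a k * t ^ k) := by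
  refine hs.of_nonneg_of_le (fun k => mul_nonneg (ha0 k) (pow_nonneg h0 k)) (fun k => ?_)
  have : t ^ k ≤ 1 := pow_le_one₀ h0 h1
  nlinarith [ha0 k, pow_nonneg h0 k]

lemma pgf_le {a : ℕ → ℝ} {m₁ m₂ : ℝ} (ha0 : ∀ k, 0 ≤ a k) (ha1 : HasSum a 1)
    (hm1 : HasSum (fun k : ℕ => (k : ℝ) * a k) m₁)
    (hm2 : HasSum (fun k : ℕ => (k : ℝ) * ((k : ℝ) - 1) * a k) m₂)
    {x : ℝ} (hx0 : 0 ≤ x) (hx1 : x ≤ 1) :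
    pgf a (1 - x) ≤ 1 - m₁ * x + m₂ / 2 * x ^ 2 := by
  have hsum : HasSum (fun k : ℕ => a k - (k : ℝ) * a k * x + (k : ℝ) * ((k:ℝ)-1) * a k * (x^2/2))
      (1 - m₁ * x + m₂ * (x^2/2)) := (ha1.sub (hm1.mul_right x)).add (hm2.mul_right (x^2/2))
  have hle : pgf a (1 - x) ≤ 1 - m₁ * x + m₂ * (x^2/2) := by
    rw [pgf, ← hsum.tsum_eq]
    refine Summable.tsum_le_tsum (fun k => ?_) (summable_aux ha0 ha1.summable (by linarith) (by linarith)) hsum.summable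
    have := mul_le_mul_of_nonneg_left (pow_bounds hx0 hx1 k).2 (ha0 k)
    nlinarith [this]
  linarith [hle]

lemma pgf_ge {a : ℕ → ℝ} {m₁ m₂ m₃ : ℝ} (ha0 : ∀ k, 0 ≤ a k) (ha1 : HasSum a 1)
    (hm1 : HasSum (fun k : ℕ => (k : ℝ) * a k) m₁)
    (hm2 : HasSum (fun k : ℕ => (k : ℝ) * ((k : ℝ) - 1) * a k) m₂)
    (hm3 : HasSum (fun k : ℕ => (k : ℝ) * ((k : ℝ) - 1) * ((k : ℝ) - 2) * a k) m₃)
    {x : ℝ} (hx0 : 0 ≤ x) (hx1 : x ≤ 1) :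
    1 - m₁ * x + m₂ / 2 * x ^ 2 - m₃ / 6 * x ^ 3 ≤ pgf a (1 - x) := by
  have hsum : HasSum (fun k : ℕ => a k - (k : ℝ) * a k * x + (k : ℝ) * ((k:ℝ)-1) * a k * (x^2/2)
      - (k:ℝ) * ((k:ℝ)-1) * ((k:ℝ)-2) * a k * (x^3/6))
      (1 - m₁ * x + m₂ * (x^2/2) - m₃ * (x^3/6)) :=
    ((ha1.sub (hm1.mul_right x)).add (hm2.mul_right (x^2/2))).sub (hm3.mul_right (x^3/6))
  have hle : 1 - m₁ * x + m₂ * (x^2/2) - m₃ * (x^3/6) ≤ pgf a (1 - x) := by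
    rw [pgf, ← hsum.tsum_eq]
    refine Summable.tsum_le_tsum (fun k => ?_) hsum.summable (summable_aux ha0 ha1.summable (by linarith) (by linarith))
    have := mul_le_mul_of_nonneg_left (pow_bounds hx0 hx1 k).1 (ha0 k)
    nlinarith [this]
  linarith [hle]

lemma pow_diff_le {u v : ℝ} (h0 : 0 ≤ u) (huv : u ≤ v) (hv : v ≤ 1) (k : ℕ) :
    v ^ k - u ^ k ≤ k * (v - u) := by
  induction k with
  | zero => norm_num
  | succ n ih =>
    have h1 : u ^ n ≤ 1 := pow_le_one₀ h0 (le_trans huv hv)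
    have h2 : u ^ n ≤ v ^ n := pow_le_pow_left₀ h0 huv n
    have h3 : 0 ≤ v := le_trans h0 huv
    have he : v^(n+1) - u^(n+1) = v*(v^n - u^n) + u^n*(v-u) := by ring
    push_cast
    nlinarith [mul_le_mul_of_nonneg_left ih h3, pow_nonneg h0 n]

/-- Lipschitz-type bound: `pgf a v - pgf a u ≤ m₁ (v - u)` for `0 ≤ u ≤ v ≤ 1`. -/
lemma pgf_lipschitz {a : ℕ → ℝ} {m₁ : ℝ} (ha0 : ∀ k, 0 ≤ a k) (ha1 : HasSum a 1)
    (hm1 : HasSum (fun k : ℕ => (k : ℝ) * a k) m₁)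
    {u v : ℝ} (h0 : 0 ≤ u) (huv : u ≤ v) (hv : v ≤ 1) :
    pgf a v - pgf a u ≤ m₁ * (v - u) := by
  have hsu : Summable (fun k => a k * u ^ k) := summable_aux ha0 ha1.summable h0 (le_trans huv hv)
  have hsv : Summable (fun k => a k * v ^ k) := summable_aux ha0 ha1.summable (le_trans h0 huv) hv
  have hsum : HasSum (fun k : ℕ => (k:ℝ) * a k * (v - u)) (m₁ * (v - u)) := hm1.mul_right _
  have : pgf a v - pgf a u = ∑' k, (a k * v ^ k - a k * u ^ k) := by
    rw [pgf, pgf, Summable.tsum_sub hsv hsu]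
  rw [this]
  refine le_trans (Summable.tsum_le_tsum (fun k => ?_) (hsv.sub hsu) hsum.summable) hsum.tsum_eq.le
  have := mul_le_mul_of_nonneg_left (pow_diff_le h0 huv hv k) (ha0 k)
  nlinarith [this]

/-- If `q < s < 1` with `q` a fixed point of the convex function `pgfp a p`, then
`pgfp a p s ≤ s`. -/
lemma pgfp_le_of_fixed {a : ℕ → ℝ} (ha0 : ∀ k, 0 ≤ a k) (ha1 : HasSum a 1)
    {p qv s : ℝ} (hp0 : 0 < p) (hp1 : p ≤ 1)
    (hq0 : 0 ≤ qv) (hqs : qv < s) (hs1 : s < 1) (hfix : pgfp a p qv = qv) :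
    pgfp a p s ≤ s := by
  set θ : ℝ := (1 - s) / (1 - qv) with hθdef
  have hq1 : qv < 1 := lt_trans hqs hs1
  have h1q : 0 < 1 - qv := by linarith
  have hθ0 : 0 < θ := div_pos (by linarith) h1q
  have hθ1 : θ < 1 := (div_lt_one h1q).2 (by linarith)
  have hθs : θ * (1 - qv) = 1 - s := div_mul_cancel₀ _ (ne_of_gt h1q)
  have harg : p * s + 1 - p = θ * (p * qv + 1 - p) + (1 - θ) * 1 := by nlinarith [hθs]
  have hq01 : 0 ≤ p * qv + 1 - p := by nlinarith
  have hterm : ∀ k : ℕ, (p * s + 1 - p) ^ k ≤ θ * (p * qv + 1 - p) ^ k + (1 - θ) := by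
    intro k
    have hc := (convexOn_pow k).2 (Set.mem_Ici.2 hq01) (Set.mem_Ici.2 (zero_le_one)) hθ0.le
      (by linarith : (0:ℝ) ≤ 1 - θ) (by ring)
    simp only [smul_eq_mul, one_pow, mul_one] at hc
    rw [harg]
    simpa using hc
  have hq01' : p * qv + 1 - p ≤ 1 := by nlinarith
  have hs01 : 0 ≤ p * s + 1 - p := by nlinarith
  have hs01' : p * s + 1 - p ≤ 1 := by nlinarith
  have hsq : Summable (fun k => a k * (p * qv + 1 - p) ^ k) := summable_aux ha0 ha1.summable hq01 hq01'
  have hss : Summable (fun k => a k * (p * s + 1 - p) ^ k) := summable_aux ha0 ha1.summable hs01 hs01'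
  have hsum : HasSum (fun k : ℕ => θ * (a k * (p * qv + 1 - p) ^ k) + (1 - θ) * a k)
      (θ * qv + (1 - θ) * 1) := by
    have h1 : HasSum (fun k => a k * (p * qv + 1 - p) ^ k) qv := by
      have := hsq.hasSum
      rwa [show ∑' k, a k * (p * qv + 1 - p) ^ k = qv from hfix] at this
    exact (h1.mul_left θ).add (ha1.mul_left (1 - θ))
  have hfin : pgfp a p s ≤ θ * qv + (1 - θ) * 1 := by
    rw [pgfp, pgf, ← hsum.tsum_eq]
    refine Summable.tsum_le_tsum (fun k => ?_) hss hsum.summable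
    have := mul_le_mul_of_nonneg_left (hterm k) (ha0 k)
    nlinarith [this]
  nlinarith [hfin, hθs]

lemma m2_pos {a : ℕ → ℝ} {m₁ m₂ : ℝ} (ha0 : ∀ k, 0 ≤ a k) (ha1 : HasSum a 1)
    (hm1 : HasSum (fun k : ℕ => (k : ℝ) * a k) m₁) (h1m : 1 < m₁)
    (hm2 : HasSum (fun k : ℕ => (k : ℝ) * ((k : ℝ) - 1) * a k) m₂) : 0 < m₂ := by
  have hnn : ∀ k : ℕ, 0 ≤ (k : ℝ) * ((k : ℝ) - 1) * a k := fun k => mul_nonneg (nn2 k) (ha0 k)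
  rcases lt_or_eq_of_le (hm2.nonneg hnn) with h | h
  · exact h
  exfalso
  have hzero : ∀ k : ℕ, (k : ℝ) * ((k : ℝ) - 1) * a k = 0 := by
    have := (hasSum_zero_iff_of_nonneg hnn).1 (h ▸ hm2)
    intro k; exact congrFun this k
  have hak : ∀ k : ℕ, 2 ≤ k → a k = 0 := by
    intro k hk
    have h2 : (0:ℝ) < (k : ℝ) * ((k : ℝ) - 1) := by
      have : (2:ℝ) ≤ (k:ℝ) := by exact_mod_cast hk
      nlinarith
    exact (mul_eq_zero.1 (hzero k)).resolve_left (ne_of_gt h2)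
  have hone : HasSum (fun k : ℕ => (k : ℝ) * a k) (a 1) := by
    have heq : (fun k : ℕ => (k : ℝ) * a k) = fun k => if k = 1 then a 1 else 0 := by
      funext k
      rcases k with _ | _ | m
      · simp
      · simp
      · have := hak (m+2) (by omega)
        simp [this]
    rw [heq]
    exact hasSum_ite_eq 1 (a 1)
  have hm1eq : m₁ = a 1 := hm1.unique hone
  have hle1 : a 1 ≤ 1 := le_hasSum ha1 1 (fun i _ => ha0 i)
  linarith [hm1eq ▸ h1m]

/-- As `p ↓ p_c`, `(1 - q_p)/(p - p_c) → 2m₁³/m₂`, i.e.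
`1 - q_p = (2m₁³/m₂)(p - p_c)(1 + o(1))`. -/
theorem one_sub_extinction_prob_asymptotics
    (a : ℕ → ℝ) (m₁ m₂ m₃ pc : ℝ) (q : ℝ → ℝ)
    (ha0 : ∀ k, 0 ≤ a k) (ha1 : HasSum a 1)
    (hm1 : HasSum (fun k : ℕ => (k : ℝ) * a k) m₁) (h1m : 1 < m₁)
    (hm2 : HasSum (fun k : ℕ => (k : ℝ) * ((k : ℝ) - 1) * a k) m₂)
    (hm3 : HasSum (fun k : ℕ => (k : ℝ) * ((k : ℝ) - 1) * ((k : ℝ) - 2) * a k) m₃)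
    (hpc : pc = 1 / m₁)
    (hq : ∀ p ∈ Set.Ioc pc 1, q p ∈ Set.Ico (0 : ℝ) 1 ∧ pgfp a p (q p) = q p) :
    Tendsto (fun p => (1 - q p) / (p - pc)) (𝓝[>] pc) (𝓝 (2 * m₁ ^ 3 / m₂)) := by
  have hm1pos : (0:ℝ) < m₁ := by linarith
  have hm1ne : m₁ ≠ 0 := ne_of_gt hm1pos
  have hpc0 : 0 < pc := by rw [hpc]; positivity
  have hpc1 : pc < 1 := by rw [hpc]; rw [div_lt_one hm1pos]; linarith
  have hm2pos : 0 < m₂ := m2_pos ha0 ha1 hm1 h1m hm2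
  have hm3nonneg : 0 ≤ m₃ := hm3.nonneg (fun k => mul_nonneg (nn3 k) (ha0 k))
  have hm1pc : m₁ * pc = 1 := by rw [hpc]; field_simp
  have hmem : Ioc pc 1 ∈ 𝓝[>] pc := Ioc_mem_nhdsGT_of_mem ⟨le_refl pc, hpc1⟩
  -- Step 1: ε(p) = 1 - q p → 0 as p ↓ pc
  have hεto0 : Tendsto (fun p => 1 - q p) (𝓝[>] pc) (𝓝 0) := by
    rw [tendsto_order]
    constructor
    · intro b hb
      filter_upwards [hmem] with p hp
      obtain ⟨hmq, _⟩ := hq p hp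
      rw [Set.mem_Ico] at hmq
      linarith [hmq.2]
    · intro b hb
      set x₀ : ℝ := min (b/2) (min (1/2) (m₂ / (m₂ + m₃ * pc))) with hx₀def
      have hden : 0 < m₂ + m₃ * pc := by nlinarith
      have hx₀pos : 0 < x₀ :=
        lt_min (by linarith) (lt_min (by norm_num) (div_pos hm2pos hden))
      have hx₀half : x₀ ≤ 1/2 := le_trans (min_le_right _ _) (min_le_left _ _)
      have hx₀b : x₀ < b := lt_of_le_of_lt (min_le_left _ _) (by linarith)
      have hx₀m : x₀ ≤ m₂/(m₂ + m₃*pc) := le_trans (min_le_right _ _) (min_le_right _ _)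
      have hx₀1 : x₀ ≤ 1 := by linarith
      have hc3 : m₃ * pc * x₀ < 3 * m₂ := by
        have h1 : m₃ * pc * x₀ ≤ m₃ * pc * (m₂/(m₂+m₃*pc)) :=
          mul_le_mul_of_nonneg_left hx₀m (mul_nonneg hm3nonneg hpc0.le)
        have h2 : m₃ * pc * (m₂/(m₂+m₃*pc)) < m₂ := by
          rw [mul_div_assoc']
          rw [div_lt_iff₀ hden]
          nlinarith
        linarith
      set c : ℝ := m₂/2 * pc^2 * x₀^2 - m₃/6 * pc^3 * x₀^3 with hcdef
      have hcpos : 0 < c := by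
        have heq : c = pc^2 * x₀^2 / 6 * (3*m₂ - m₃*pc*x₀) := by rw [hcdef]; ring
        rw [heq]
        apply mul_pos (by positivity) (by linarith)
      have hcc : m₂/2*(pc*x₀)^2 - m₃/6*(pc*x₀)^3 = c := by rw [hcdef]; ring
      have hδpos : 0 < c / (m₁ * x₀) := by positivity
      clear_value x₀ c
      filter_upwards [hmem, Ioo_mem_nhdsGT_of_mem
        (show pc ∈ Ico pc (pc + c/(m₁*x₀)) from ⟨le_refl _, by linarith⟩)] with p hp hpδ
      obtain ⟨hmq, hfix⟩ := hq p hp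
      rw [Set.mem_Ico] at hmq
      obtain ⟨hq0, hq1⟩ := hmq
      obtain ⟨hppc, hp1⟩ := hp
      have hp0 : 0 < p := lt_trans hpc0 hppc
      by_contra hcon
      push_neg at hcon
      have hql : q p < 1 - x₀ := by linarith
      have hle := pgfp_le_of_fixed ha0 ha1 hp0 hp1 hq0 hql (by linarith) hfix
      have harg : p * (1 - x₀) + 1 - p = 1 - p * x₀ := by ring
      have hpgfp : pgfp a p (1 - x₀) = pgf a (1 - p * x₀) := by rw [pgfp, harg]
      have hpx1 : p * x₀ ≤ 1 := mul_le_one₀ hp1 hx₀pos.le hx₀1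
      have hpcx1 : pc * x₀ ≤ 1 := mul_le_one₀ hpc1.le hx₀pos.le hx₀1
      have hlow := pgf_ge ha0 ha1 hm1 hm2 hm3 (x := pc * x₀) (by positivity) hpcx1
      have hmono : pc * x₀ ≤ p * x₀ := mul_le_mul_of_nonneg_right hppc.le hx₀pos.le
      have hlip := pgf_lipschitz ha0 ha1 hm1 (u := 1 - p * x₀) (v := 1 - pc * x₀)
        (by linarith) (by linarith) (by linarith [mul_nonneg hpc0.le hx₀pos.le])
      have hfin : m₁ * x₀ * (p - pc) < c := by
        have h2 : 0 < m₁ * x₀ := by positivity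
        have h4 : (p - pc) * (m₁ * x₀) < c := (lt_div_iff₀ h2).1 (by linarith [hpδ.2])
        have h5 : m₁ * x₀ * (p - pc) = (p - pc) * (m₁ * x₀) := by ring
        linarith
      have hmpc : m₁ * (pc * x₀) = x₀ := by rw [← mul_assoc, hm1pc]; ring
      have hlow' : 1 - x₀ + c ≤ pgf a (1 - pc * x₀) := by
        linarith [hlow, hcc, hmpc]
      have hlip' : pgf a (1 - pc * x₀) - pgf a (1 - p * x₀) ≤ m₁ * x₀ * (p - pc) := by
        have he : m₁ * ((1 - pc * x₀) - (1 - p * x₀)) = m₁ * x₀ * (p - pc) := by ring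
        linarith [hlip, he.le, he.ge]
      rw [hpgfp] at hle
      linarith [hle, hlow', hlip', hfin]
  -- Step 2: key fixed-point inequalities
  have key : ∀ p ∈ Ioc pc 1, m₁*p - 1 ≤ m₂/2*p^2*(1 - q p) ∧
      m₂/2*p^2*(1 - q p) - m₃/6*p^3*(1 - q p)^2 ≤ m₁*p - 1 := by
    intro p hp
    obtain ⟨hmq, hfix⟩ := hq p hp
    rw [Set.mem_Ico] at hmq
    obtain ⟨hq0, hq1⟩ := hmq
    obtain ⟨hppc, hp1⟩ := hp
    have hp0 : 0 < p := lt_trans hpc0 hppc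
    set ε : ℝ := 1 - q p with hεdef
    have hε0 : 0 < ε := by rw [hεdef]; linarith
    have hε1 : ε ≤ 1 := by rw [hεdef]; linarith
    have hx0 : 0 ≤ p * ε := by positivity
    have hx1 : p * ε ≤ 1 := by nlinarith
    have heq : pgf a (1 - p * ε) = 1 - ε := by
      have h1 : p * q p + 1 - p = 1 - p * ε := by rw [hεdef]; ring
      have h2 : pgfp a p (q p) = pgf a (1 - p * ε) := by rw [pgfp, h1]
      rw [← h2, hfix, hεdef]; ring
    have hU := pgf_le ha0 ha1 hm1 hm2 hx0 hx1
    have hL := pgf_ge ha0 ha1 hm1 hm2 hm3 hx0 hx1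
    rw [heq] at hU hL
    constructor
    · have h' : (m₁*p - 1)*ε ≤ (m₂/2*p^2*ε)*ε := by nlinarith [hU]
      exact le_of_mul_le_mul_right h' hε0
    · have h' : (m₂/2*p^2*ε - m₃/6*p^3*ε^2)*ε ≤ (m₁*p - 1)*ε := by nlinarith [hL]
      exact le_of_mul_le_mul_right h' hε0
  -- Step 3: squeeze
  have hid : Tendsto (fun p : ℝ => p) (𝓝[>] pc) (𝓝 pc) := tendsto_id.mono_left nhdsWithin_le_nhds
  have hD : Tendsto (fun p => m₂/2*p^2 - m₃/6*p^3*(1 - q p)) (𝓝[>] pc) (𝓝 (m₂/2*pc^2)) := by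
    have h1 : Tendsto (fun p : ℝ => m₂/2*p^2) (𝓝[>] pc) (𝓝 (m₂/2*pc^2)) :=
      ((hid.pow 2).const_mul (m₂/2))
    have h2 : Tendsto (fun p : ℝ => m₃/6*p^3*(1 - q p)) (𝓝[>] pc) (𝓝 (m₃/6*pc^3*0)) :=
      ((hid.pow 3).const_mul (m₃/6)).mul hεto0
    have := h1.sub h2
    simpa using this
  have hDpc : (0:ℝ) < m₂/2*pc^2 := by positivity
  have hDpos : ∀ᶠ p in 𝓝[>] pc, 0 < m₂/2*p^2 - m₃/6*p^3*(1 - q p) :=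
    hD.eventually (eventually_gt_nhds hDpc)
  have hval : m₁ / (m₂/2*pc^2) = 2 * m₁ ^ 3 / m₂ := by
    rw [hpc]; field_simp
  have hval2 : 2*m₁ / (m₂*pc^2) = 2 * m₁ ^ 3 / m₂ := by
    rw [hpc]; field_simp
  have hupper : Tendsto (fun p => m₁ / (m₂/2*p^2 - m₃/6*p^3*(1 - q p))) (𝓝[>] pc)
      (𝓝 (2 * m₁ ^ 3 / m₂)) := by
    rw [← hval]
    exact tendsto_const_nhds.div hD (ne_of_gt hDpc)
  have hlower : Tendsto (fun p : ℝ => 2*m₁ / (m₂*p^2)) (𝓝[>] pc) (𝓝 (2 * m₁ ^ 3 / m₂)) := by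
    rw [← hval2]
    exact tendsto_const_nhds.div ((hid.pow 2).const_mul m₂) (by positivity)
  refine tendsto_of_tendsto_of_tendsto_of_le_of_le' hlower hupper ?_ ?_
  · filter_upwards [hmem] with p hp
    obtain ⟨hppc, hp1⟩ := hp
    have hp0 : 0 < p := lt_trans hpc0 hppc
    have hppc' : 0 < p - pc := by linarith
    have hm2p2 : 0 < m₂ * p^2 := by positivity
    rw [div_le_div_iff₀ hm2p2 hppc']
    have k1 := (key p ⟨hppc, hp1⟩).1
    linarith [k1, hm1pc]
  · filter_upwards [hmem, hDpos] with p hp hDp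
    obtain ⟨hppc, hp1⟩ := hp
    have hp0 : 0 < p := lt_trans hpc0 hppc
    have hppc' : 0 < p - pc := by linarith
    rw [div_le_div_iff₀ hppc' hDp]
    have k2 := (key p ⟨hppc, hp1⟩).2
    linarith [k2, hm1pc]
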